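/- Let $h > 0$, $a = \sqrt{5h}$, and let $u_0 : \mathbb{R} \to \mathbb{C}$ be continuously differentiable. On the open set $\Omega = \{ (t,x) \in \mathbb{R}^2 : x \sinh(at) + a \cosh(at) \ne 0 \}$, define $u(t,x) = \dfrac{a}{x \sinh(at) + a \cosh(at)}\; u_0\!\left( a\, \frac{x \cosh(at) + a \sinh(at)}{x \sinh(at) + a \cosh(at)} \right)$. Then $u$ satisfies $\partial_t u + (x^2 - 5h)\, \partial_x u + x\, u = 0$ on $\Omega$ (equivalently, $h D_t u + Q_2 u = 0$ where $Q_2 u = x^2 h D_x u - i h x u - 5 h^2 D_x u$ and $D = \tfrac{1}{i}\partial$), and $u(0,x) = u_0(x)$ for all $x \in \mathbb{R}$. -/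

import Mathlib

noncomputable section

/-- The exact propagator `e^{-itQ₂/h}u₀` of the model operator
`Q₂ = x²hDₓ - ihx - 5h²Dₓ`, with `a = √(5h)`:
`u(t,x) = a (x sinh(at) + a cosh(at))⁻¹ u₀(a (x cosh(at) + a sinh(at))/(x sinh(at) + a cosh(at)))`. -/
def q2Propagator (h : ℝ) (u₀ : ℝ → ℂ) (t x : ℝ) : ℂ :=
  let a := Real.sqrt (5 * h)
  ((a / (x * Real.sinh (a * t) + a * Real.cosh (a * t)) : ℝ) : ℂ) *
    u₀ (a * ((x * Real.cosh (a * t) + a * Real.sinh (a * t)) /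
      (x * Real.sinh (a * t) + a * Real.cosh (a * t))))

/-- On the open set `Ω = {(t,x) : x sinh(at) + a cosh(at) ≠ 0}` the propagator
satisfies `∂ₜu + (x² - 5h)∂ₓu + x·u = 0` (i.e. `hDₜu + Q₂u = 0`), with initial
condition `u(0,·) = u₀`. -/
theorem q2Propagator_solves_evolution_equation
    (h : ℝ) (hh : 0 < h) (u₀ : ℝ → ℂ) (hu₀ : ContDiff ℝ 1 u₀) :
    (∀ t x : ℝ,
      x * Real.sinh (Real.sqrt (5 * h) * t) +
          Real.sqrt (5 * h) * Real.cosh (Real.sqrt (5 * h) * t) ≠ 0 →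
      deriv (fun s => q2Propagator h u₀ s x) t +
        (((x ^ 2 - 5 * h : ℝ)) : ℂ) * deriv (fun z => q2Propagator h u₀ t z) x +
        (x : ℂ) * q2Propagator h u₀ t x = 0) ∧
    (∀ x : ℝ, q2Propagator h u₀ 0 x = u₀ x) := by
  have h5 : (0:ℝ) < 5 * h := by linarith
  have ha : 0 < Real.sqrt (5 * h) := Real.sqrt_pos.mpr h5
  have ha2 : Real.sqrt (5 * h) ^ 2 = 5 * h := Real.sq_sqrt h5.le
  constructor
  · intro t x hD
    simp only [q2Propagator]
    set a := Real.sqrt (5 * h) with ha_def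
    set st := Real.sinh (a * t) with hst_def
    set ct := Real.cosh (a * t) with hct_def
    have hDv : x * st + a * ct ≠ 0 := hD
    -- derivative of u₀
    have hu : ∀ y : ℝ, HasDerivAt u₀ (deriv u₀ y) y := fun y =>
      ((hu₀.differentiable one_ne_zero) y).hasDerivAt
    -- t-derivatives
    have hid : HasDerivAt (fun s : ℝ => a * s) a t := by
      simpa using (hasDerivAt_id t).const_mul a
    have hsinh : HasDerivAt (fun s : ℝ => Real.sinh (a * s)) (ct * a) t :=
      (Real.hasDerivAt_sinh (a * t)).comp t hid
    have hcosh : HasDerivAt (fun s : ℝ => Real.cosh (a * s)) (st * a) t :=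
      (Real.hasDerivAt_cosh (a * t)).comp t hid
    have hDt : HasDerivAt (fun s => x * Real.sinh (a * s) + a * Real.cosh (a * s))
        (x * (ct * a) + a * (st * a)) t := (hsinh.const_mul x).add (hcosh.const_mul a)
    have hNt : HasDerivAt (fun s => x * Real.cosh (a * s) + a * Real.sinh (a * s))
        (x * (st * a) + a * (ct * a)) t := (hcosh.const_mul x).add (hsinh.const_mul a)
    have hft : HasDerivAt
        (fun s => ((a / (x * Real.sinh (a * s) + a * Real.cosh (a * s)) : ℝ) : ℂ))
        (((0 * (x * st + a * ct) - a * (x * (ct * a) + a * (st * a))) /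
          (x * st + a * ct) ^ 2 : ℝ) : ℂ) t :=
      (((hasDerivAt_const t a).div hDt hDv)).ofReal_comp
    have hφt : HasDerivAt
        (fun s => a * ((x * Real.cosh (a * s) + a * Real.sinh (a * s)) /
          (x * Real.sinh (a * s) + a * Real.cosh (a * s))))
        (a * (((x * (st * a) + a * (ct * a)) * (x * st + a * ct) -
          (x * ct + a * st) * (x * (ct * a) + a * (st * a))) / (x * st + a * ct) ^ 2)) t :=
      ((hNt.div hDt hDv)).const_mul a
    have hcompt : HasDerivAt
        (fun s => u₀ (a * ((x * Real.cosh (a * s) + a * Real.sinh (a * s)) /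
          (x * Real.sinh (a * s) + a * Real.cosh (a * s)))))
        ((a * (((x * (st * a) + a * (ct * a)) * (x * st + a * ct) -
          (x * ct + a * st) * (x * (ct * a) + a * (st * a))) / (x * st + a * ct) ^ 2)) •
          deriv u₀ (a * ((x * ct + a * st) / (x * st + a * ct)))) t :=
      (hu _).scomp t hφt
    have hT := hft.fun_mul hcompt
    -- x-derivatives
    have hsx : HasDerivAt (fun z : ℝ => z * st + a * ct) st x := by
      simpa using ((hasDerivAt_id x).mul_const st).add_const (a * ct)
    have hnx : HasDerivAt (fun z : ℝ => z * ct + a * st) ct x := by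
      simpa using ((hasDerivAt_id x).mul_const ct).add_const (a * st)
    have hfx : HasDerivAt (fun z => ((a / (z * st + a * ct) : ℝ) : ℂ))
        (((0 * (x * st + a * ct) - a * st) / (x * st + a * ct) ^ 2 : ℝ) : ℂ) x :=
      ((hasDerivAt_const x a).div hsx hDv).ofReal_comp
    have hφx : HasDerivAt (fun z => a * ((z * ct + a * st) / (z * st + a * ct)))
        (a * ((ct * (x * st + a * ct) - (x * ct + a * st) * st) / (x * st + a * ct) ^ 2)) x :=
      (hnx.div hsx hDv).const_mul a
    have hcompx : HasDerivAt (fun z => u₀ (a * ((z * ct + a * st) / (z * st + a * ct))))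
        ((a * ((ct * (x * st + a * ct) - (x * ct + a * st) * st) / (x * st + a * ct) ^ 2)) •
          deriv u₀ (a * ((x * ct + a * st) / (x * st + a * ct)))) x :=
      (hu _).scomp x hφx
    have hX := hfx.fun_mul hcompx
    rw [hT.deriv, hX.deriv]
    have hDc : ((x * st + a * ct : ℝ) : ℂ) ≠ 0 := by exact_mod_cast hDv
    have h5c : ((5 * h : ℝ) : ℂ) = (a : ℂ) ^ 2 := by exact_mod_cast ha2.symm
    set U := u₀ (a * ((x * ct + a * st) / (x * st + a * ct))) with hU
    set C := deriv u₀ (a * ((x * ct + a * st) / (x * st + a * ct))) with hC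
    simp only [Complex.real_smul, ← hst_def, ← hct_def]
    push_cast
    rw [show ((5:ℂ) * (h:ℂ)) = (a:ℂ)^2 by push_cast at h5c; linear_combination h5c]
    have hd : ((x : ℂ) * st + (a : ℂ) * ct) ≠ 0 := by exact_mod_cast hDv
    field_simp [hd]
    ring
  · intro x
    simp only [q2Propagator, mul_zero, Real.sinh_zero, Real.cosh_zero, mul_one, mul_zero,
      zero_mul, add_zero, zero_add]
    rw [div_self ha.ne',
      show Real.sqrt (5 * h) * (x / Real.sqrt (5 * h)) = x by field_simp]
    simp
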